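/- Let (A,σ) be a difference ring with σ injective on relevant quotients, and (M,σ) a well-mixed difference module over (A,σ) such that every nonzero element has annihilator contained in some prime σ-ideal that is maximal among σ-prime ideals. If the localization M_𝔭 = 0 for every σ-prime ideal 𝔭 of A (a prime ideal with σ^{-1}(𝔭) = 𝔭), then M = 0. More precisely: if M ≠ 0, pick 0 ≠ x ∈ M; then Ann(x) is a proper well-mixed σ-ideal, and for any σ-prime 𝔭 ⊇ Ann(x), the image of x in M_𝔭 is nonzero. -/

import Mathlib

/-- local-global vanishing for a well-mixed difference module.
If every nonzero element of `M` has its annihilator contained in a `σ`-prime ideal,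
and all localizations of `M` at `σ`-prime ideals vanish, then `M = 0`.  More
precisely, if `𝔭` is a prime containing `Ann(x)` then the image of `x` in `M_𝔭`
is nonzero. -/
theorem stmt7 {A : Type*} [CommRing A] (σ : A →+* A)
    {M : Type*} [AddCommGroup M] [Module A M]
    (σM : M →+ M) (hσM : ∀ (a : A) (m : M), σM (a • m) = σ a • σM m)
    (hwm : ∀ (a : A) (m : M), a • m = 0 → σ a • m = 0)
    (hmax : ∀ x : M, x ≠ 0 → ∃ 𝔭 : Ideal A, 𝔭.IsPrime ∧ Ideal.comap σ 𝔭 = 𝔭 ∧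
      ∀ a : A, a • x = 0 → a ∈ 𝔭) :
    ((∀ (𝔭 : Ideal A) (h𝔭 : 𝔭.IsPrime), Ideal.comap σ 𝔭 = 𝔭 →
        ∀ y : LocalizedModule (@Ideal.primeCompl A _ 𝔭 h𝔭) M, y = 0) → ∀ m : M, m = 0) ∧
    (∀ x : M, x ≠ 0 → ∀ (𝔭 : Ideal A) (h𝔭 : 𝔭.IsPrime),
      (∀ a : A, a • x = 0 → a ∈ 𝔭) →
      LocalizedModule.mkLinearMap (@Ideal.primeCompl A _ 𝔭 h𝔭) M x ≠ 0) := by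
  constructor
  · intro hloc m
    by_contra hm
    obtain ⟨𝔭, hp, hcomap, hann⟩ := hmax m hm
    have := hloc 𝔭 hp hcomap (LocalizedModule.mkLinearMap 𝔭.primeCompl M m)
    rw [LocalizedModule.mkLinearMap_apply] at this
    rw [show (0 : LocalizedModule 𝔭.primeCompl M) = LocalizedModule.mk 0 1 from
      (LocalizedModule.zero_mk 1).symm] at this
    obtain ⟨u, hu⟩ := LocalizedModule.mk_eq.mp this
    simp only [one_smul, smul_zero] at hu
    exact u.2 (hann u (by simpa [Submonoid.smul_def] using hu))
  · intro x hx 𝔭 hp hann hzero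
    rw [LocalizedModule.mkLinearMap_apply] at hzero
    rw [show (0 : LocalizedModule 𝔭.primeCompl M) = LocalizedModule.mk 0 1 from
      (LocalizedModule.zero_mk 1).symm] at hzero
    obtain ⟨u, hu⟩ := LocalizedModule.mk_eq.mp hzero
    simp only [one_smul, smul_zero] at hu
    exact u.2 (hann u (by simpa [Submonoid.smul_def] using hu))
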